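/- For every integer m ≥ 1, 4 ∫_0^1 x^(1+2m)/(1+x^2)^2 dx = 2m·|ln 2 − ∑_{n=1}^{m−1} (−1)^(n−1)/n| − 1. -/

import Mathlib

open intervalIntegral Real

noncomputable def Rp (k : ℕ) : ℝ := ∫ x in (0:ℝ)..1, x^(2*k+1) / (1+x^2)

lemma one_add_sq_pos (x : ℝ) : 0 < 1 + x^2 := by positivity

lemma cont1 (n : ℕ) : Continuous fun x : ℝ => x^n / (1+x^2) := by
  apply Continuous.div (by continuity) (by continuity)
  intro x; exact ne_of_gt (one_add_sq_pos x)

lemma cont2 (n : ℕ) : Continuous fun x : ℝ => x^n / (1+x^2)^2 := by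
  apply Continuous.div (by continuity) (by continuity)
  intro x; positivity

lemma Rp_nonneg (k : ℕ) : 0 ≤ Rp k := by
  apply intervalIntegral.integral_nonneg (by norm_num)
  intro x hx
  have := one_add_sq_pos x
  have : (0:ℝ) ≤ x^(2*k+1) := pow_nonneg hx.1 _
  positivity

lemma Rp_zero : Rp 0 = Real.log 2 / 2 := by
  have h : ∀ x ∈ Set.uIcc (0:ℝ) 1,
      HasDerivAt (fun x : ℝ => Real.log (1+x^2) / 2) (x^(2*0+1) / (1+x^2)) x := by
    intro x _
    have h1 : HasDerivAt (fun x : ℝ => 1 + x^2) (2*x) x := by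
      simpa using ((hasDerivAt_pow 2 x).const_add 1)
    have h2 := (h1.log (ne_of_gt (one_add_sq_pos x))).div_const 2
    refine h2.congr_deriv ?_
    field_simp; ring
  have h2 := intervalIntegral.integral_eq_sub_of_hasDerivAt h
    (((cont1 1).intervalIntegrable _ _))
  norm_num at h2
  rw [Rp]
  norm_num
  linarith

lemma int_x_div_sq : (∫ x in (0:ℝ)..1, x / (1+x^2)^2) = 1/4 := by
  have h : ∀ x ∈ Set.uIcc (0:ℝ) 1,
      HasDerivAt (fun x : ℝ => -(1 / (2 * (1+x^2)))) (x / (1+x^2)^2) x := by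
    intro x _
    have hne : (2 * (1+x^2)) ≠ 0 := by positivity
    have h1 : HasDerivAt (fun x : ℝ => 2 * (1+x^2)) (2*(2*x)) x := by
      simpa using ((hasDerivAt_pow 2 x).const_add 1).const_mul 2
    have h2 := ((hasDerivAt_const x (1:ℝ)).div h1 hne).neg
    refine h2.congr_deriv ?_
    have := one_add_sq_pos x
    field_simp
    ring
  have hI : IntervalIntegrable (fun x : ℝ => x / (1+x^2)^2) MeasureTheory.volume 0 1 := by
    simpa using ((cont2 1).intervalIntegrable (0:ℝ) 1)
  have h2 := intervalIntegral.integral_eq_sub_of_hasDerivAt h (by simpa using hI)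
  norm_num at h2
  norm_num
  linarith

lemma Rp_rec (k : ℕ) : Rp k + Rp (k+1) = 1 / (2*k+2) := by
  have hadd : Rp k + Rp (k+1)
      = ∫ x in (0:ℝ)..1, (x^(2*k+1) / (1+x^2) + x^(2*(k+1)+1) / (1+x^2)) := by
    rw [Rp, Rp, ← intervalIntegral.integral_add ((cont1 _).intervalIntegrable _ _)
      ((cont1 _).intervalIntegrable _ _)]
  have heq : (fun x : ℝ => x^(2*k+1) / (1+x^2) + x^(2*(k+1)+1) / (1+x^2))
      = fun x : ℝ => x^(2*k+1) := by
    funext x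
    have h := ne_of_gt (one_add_sq_pos x)
    field_simp
    ring
  rw [hadd, heq, integral_pow]
  push_cast
  norm_num
  ring

lemma log_sub_sum (k : ℕ) :
    Real.log 2 - ∑ n ∈ Finset.Icc 1 k, (-1:ℝ)^(n-1) / n = (-1:ℝ)^k * (2 * Rp k) := by
  induction k with
  | zero => simp [Rp_zero]; ring
  | succ k ih =>
      have hsum : ∑ n ∈ Finset.Icc 1 (k+1), (-1:ℝ)^(n-1) / n
          = (∑ n ∈ Finset.Icc 1 k, (-1:ℝ)^(n-1) / n) + (-1:ℝ)^k / (k+1) := by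
        rw [Finset.sum_Icc_succ_top (by omega)]
        simp
      have hrec := Rp_rec k
      have hRk : Rp k = 1 / (2*k+2) - Rp (k+1) := by linarith
      rw [hsum]
      have : Real.log 2 - ((∑ n ∈ Finset.Icc 1 k, (-1:ℝ)^(n-1) / n) + (-1:ℝ)^k / (k+1))
          = (-1:ℝ)^k * (2 * Rp k) - (-1:ℝ)^k / (k+1) := by
        rw [← ih]; ring
      rw [this, hRk]
      have hk : (k:ℝ) + 1 ≠ 0 := by positivity
      field_simp
      ring

noncomputable def Jf (m : ℕ) : ℝ := ∫ x in (0:ℝ)..1, x^(1+2*m) / (1+x^2)^2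

lemma Jf_one : Jf 1 = Rp 0 - 1/4 := by
  have heq : (fun x : ℝ => x^(1+2*1) / (1+x^2)^2)
      = fun x : ℝ => x^(2*0+1) / (1+x^2) - x / (1+x^2)^2 := by
    funext x
    have h := ne_of_gt (one_add_sq_pos x)
    field_simp
    ring
  rw [Jf, heq, intervalIntegral.integral_sub ((cont1 _).intervalIntegrable _ _)
    (by simpa using ((cont2 1).intervalIntegrable (0:ℝ) 1)), int_x_div_sq, Rp]

lemma Jf_rec (m : ℕ) : Jf m + Jf (m+1) = Rp m := by
  have hadd : Jf m + Jf (m+1)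
      = ∫ x in (0:ℝ)..1, (x^(1+2*m) / (1+x^2)^2 + x^(1+2*(m+1)) / (1+x^2)^2) := by
    rw [Jf, Jf, ← intervalIntegral.integral_add ((cont2 _).intervalIntegrable _ _)
      ((cont2 _).intervalIntegrable _ _)]
  have heq : (fun x : ℝ => x^(1+2*m) / (1+x^2)^2 + x^(1+2*(m+1)) / (1+x^2)^2)
      = fun x : ℝ => x^(2*m+1) / (1+x^2) := by
    funext x
    have h := ne_of_gt (one_add_sq_pos x)
    field_simp
    ring
  rw [hadd, heq, Rp]

lemma Jf_formula (k : ℕ) : 4 * Jf (k+1) = 4 * (k+1) * Rp k - 1 := by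
  induction k with
  | zero => rw [Jf_one]; ring
  | succ k ih =>
      have h1 := Jf_rec (k+1)
      have h2 := Rp_rec k
      push_cast at ih h2 ⊢
      have hne : (2*(k:ℝ)+2) ≠ 0 := by positivity
      have hRk : Rp k = 1/(2*(k:ℝ)+2) - Rp (k+1) := by linarith
      have h3 : (4:ℝ)*((k:ℝ)+1) * Rp k = 2 - 4*((k:ℝ)+1)*Rp (k+1) := by
        rw [hRk]; field_simp; ring
      linear_combination 4*h1 - ih - h3

theorem stmt_2 (m : ℕ) (hm : 1 ≤ m) :
    4 * ∫ x in (0:ℝ)..1, x^(1 + 2*m) / (1 + x^2)^2 =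
      2 * m * |Real.log 2 - ∑ n ∈ Finset.Icc 1 (m-1), (-1:ℝ)^(n-1) / n| - 1 := by
  obtain ⟨k, rfl⟩ : ∃ k, m = k + 1 := ⟨m - 1, by omega⟩
  have habs : |Real.log 2 - ∑ n ∈ Finset.Icc 1 (k+1-1), (-1:ℝ)^(n-1) / n| = 2 * Rp k := by
    have h1 : k + 1 - 1 = k := rfl
    rw [h1, log_sub_sum, abs_mul, abs_pow, abs_neg, abs_one, one_pow, one_mul,
      abs_of_nonneg (by linarith [Rp_nonneg k])]
  rw [habs]
  have := Jf_formula k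
  rw [Jf] at this
  push_cast
  linear_combination this
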